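/- In the convex homogeneous setup, the Legendre transform of the hypersurface N, namely the set L(N) = { (⟪p, ∇f p⟫)⁻¹ • ∇f p | p ∈ N }, equals { q ∈ E | sSup { ⟪p, q⟫ | p ∈ N } = 1 }. (The last assertion of Lemma 3.2: L(N) = {q ∈ ℝⁿ | sup_{p∈N} ⟨p,q⟩ = 1} for a smooth, compact, strictly convex hypersurface N enclosing the origin.) -/

import Mathlib

open scoped RealInnerProductSpace
open Set Filter Topology

variable {E : Type*} [NormedAddCommGroup E] [InnerProductSpace ℝ E] [CompleteSpace E]

lemma lineDeriv_aux {f : E → ℝ} {g p : E} (hf : HasGradientAt f g p) (v : E) :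
    HasDerivAt (fun t : ℝ => f (p + t • v)) ⟪g, v⟫ 0 := by
  have h1 : HasDerivAt (fun t : ℝ => p + t • v) v 0 := by
    simpa using ((hasDerivAt_id (0:ℝ)).smul_const v).const_add p
  have h2 : HasFDerivAt f (InnerProductSpace.toDual ℝ E g) ((fun t : ℝ => p + t • v) 0) := by
    simpa using hf.hasFDerivAt
  have h3 := h2.comp_hasDerivAt 0 h1
  rw [show (InnerProductSpace.toDual ℝ E g) v = ⟪g, v⟫ from by simp] at h3
  exact h3

lemma grad_ineq {f : E → ℝ} {g p : E} (hconv : ConvexOn ℝ univ f)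
    (hf : HasGradientAt f g p) (x : E) : f p + ⟪g, x - p⟫ ≤ f x := by
  set φ : ℝ → ℝ := fun t => f (p + t • (x - p)) with hφdef
  have hd : HasDerivAt φ ⟪g, x - p⟫ 0 := lineDeriv_aux hf _
  have hφ : ConvexOn ℝ univ φ := by
    have h := hconv.comp_affineMap (AffineMap.lineMap p x : ℝ →ᵃ[ℝ] E)
    have hfun : (f ∘ (AffineMap.lineMap p x : ℝ →ᵃ[ℝ] E)) = φ := by
      funext t
      simp only [Function.comp_apply, AffineMap.lineMap_apply, hφdef, vsub_eq_sub, vadd_eq_add]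
      rw [add_comm]
    rw [hfun] at h
    simpa using h
  have ht : Tendsto (slope φ 0) (𝓝[>] 0) (𝓝 ⟪g, x - p⟫) :=
    (hasDerivAt_iff_tendsto_slope.mp hd).mono_left
      (nhdsWithin_mono _ (fun t ht => ne_of_gt ht))
  have hle : ⟪g, x - p⟫ ≤ slope φ 0 1 := by
    refine le_of_tendsto ht ?_
    filter_upwards [Ioo_mem_nhdsGT_of_mem (by constructor <;> norm_num : (0:ℝ) ∈ Ico 0 1)]
      with t htm
    rw [slope_def_field, slope_def_field]
    exact hφ.secant_mono trivial trivial trivial (ne_of_gt htm.1) one_ne_zero htm.2.le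
  have h0 : φ 0 = f p := by simp [hφdef]
  have h1 : φ 1 = f x := by simp [hφdef]
  rw [slope_def_field] at hle
  simp [h0, h1] at hle
  linarith

lemma subgrad_unique {f : E → ℝ} {g p : E} (hf : HasGradientAt f g p) (q : E)
    (hq : ∀ x, f p + ⟪q, x - p⟫ ≤ f x) : q = g := by
  have key : ∀ v : E, ⟪q, v⟫ ≤ ⟪g, v⟫ := by
    intro v
    have hd := lineDeriv_aux hf v
    have ht : Tendsto (slope (fun t : ℝ => f (p + t • v)) 0) (𝓝[>] 0) (𝓝 ⟪g, v⟫) :=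
      (hasDerivAt_iff_tendsto_slope.mp hd).mono_left
        (nhdsWithin_mono _ (fun t ht => ne_of_gt ht))
    refine ge_of_tendsto ht ?_
    filter_upwards [self_mem_nhdsWithin] with t (htpos : 0 < t)
    have h := hq (p + t • v)
    have hin : ⟪q, p + t • v - p⟫ = t * ⟪q, v⟫ := by
      rw [add_sub_cancel_left, real_inner_smul_right]
    rw [hin] at h
    rw [slope_def_field]
    have h0 : f (p + (0:ℝ) • v) = f p := by simp
    rw [sub_zero, le_div_iff₀ htpos]
    simp only [h0]
    linarith
  have h1 : ⟪q - g, q - g⟫ ≤ 0 := by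
    rw [inner_sub_left]
    linarith [key (q - g)]
  have := real_inner_self_nonpos.mp h1
  rwa [sub_eq_zero] at this

lemma euler_rel {f : E → ℝ} {g p : E} (hf_hom : ∀ t : ℝ, 0 < t → ∀ x, f (t • x) = t * f x)
    (hf : HasGradientAt f g p) : ⟪g, p⟫ = f p := by
  have hd : HasDerivAt (fun t : ℝ => f (p + t • p)) ⟪g, p⟫ 0 := lineDeriv_aux hf p
  have h2 : HasDerivAt (fun t : ℝ => (1 + t) * f p) (f p) 0 := by
    simpa using ((hasDerivAt_id (0:ℝ)).const_add 1).mul_const (f p)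
  have heq : (fun t : ℝ => (1 + t) * f p) =ᶠ[𝓝 (0:ℝ)] fun t => f (p + t • p) := by
    filter_upwards [Ioo_mem_nhds (by norm_num : (-1:ℝ) < 0) (by norm_num : (0:ℝ) < 1)] with t ht
    have h1t : (0:ℝ) < 1 + t := by linarith [ht.1]
    rw [show p + t • p = (1 + t) • p by module, hf_hom (1 + t) h1t p]
  exact (hd.congr_of_eventuallyEq heq).unique h2


/-- **Lemma 3.2, last assertion.** For a smooth, compact, strictly convex hypersurface
`N = f⁻¹(1)` enclosing the origin, the Legendre transform
`L(N) = { ⟨p, ∇f p⟩⁻¹ • ∇f p | p ∈ N }` equals `{ q | sup_{p ∈ N} ⟨p, q⟩ = 1 }`. -/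
theorem legendre_transform_eq (d : ℕ) (hd : 1 ≤ d)
    (f : EuclideanSpace ℝ (Fin d) → ℝ)
    (gradf : EuclideanSpace ℝ (Fin d) → EuclideanSpace ℝ (Fin d))
    (hf_cont : Continuous f)
    (hf_hom : ∀ t : ℝ, 0 < t → ∀ x, f (t • x) = t * f x)
    (hf_pos : ∀ x : EuclideanSpace ℝ (Fin d), x ≠ 0 → 0 < f x)
    (hf_grad : ∀ x : EuclideanSpace ℝ (Fin d), x ≠ 0 → HasGradientAt f (gradf x) x)
    (hgrad_cont : ContinuousOn gradf {x : EuclideanSpace ℝ (Fin d) | x ≠ 0})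
    (hconv : StrictConvex ℝ {x : EuclideanSpace ℝ (Fin d) | f x ≤ 1}) :
    {q : EuclideanSpace ℝ (Fin d) | ∃ p, f p = 1 ∧ q = (⟪p, gradf p⟫)⁻¹ • gradf p} =
      {q : EuclideanSpace ℝ (Fin d) | sSup {r : ℝ | ∃ p, f p = 1 ∧ r = ⟪p, q⟫} = 1} := by
  -- f 0 = 0
  have f0 : f 0 = 0 := by
    have := hf_hom 2 two_pos 0
    rw [smul_zero] at this; linarith
  have hne0 : ∀ p : EuclideanSpace ℝ (Fin d), f p = 1 → p ≠ 0 := by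
    rintro p hp rfl; rw [f0] at hp; exact one_ne_zero hp.symm
  have hfnonneg : ∀ x : EuclideanSpace ℝ (Fin d), 0 ≤ f x := by
    intro x
    rcases eq_or_ne x 0 with rfl | hx
    · rw [f0]
    · exact (hf_pos x hx).le
  -- nonemptiness of N
  have hx₁ : ∃ x : EuclideanSpace ℝ (Fin d), ‖x‖ = 1 := by
    refine ⟨EuclideanSpace.single ⟨0, hd⟩ (1:ℝ), ?_⟩
    rw [EuclideanSpace.norm_single]; norm_num
  obtain ⟨x₁, hx₁n⟩ := hx₁
  have hx₁0 : x₁ ≠ 0 := by intro h; rw [h, norm_zero] at hx₁n; norm_num at hx₁n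
  have hNne : ∃ p : EuclideanSpace ℝ (Fin d), f p = 1 := by
    refine ⟨(f x₁)⁻¹ • x₁, ?_⟩
    rw [hf_hom _ (inv_pos.mpr (hf_pos x₁ hx₁0)) x₁, inv_mul_cancel₀ (hf_pos x₁ hx₁0).ne']
  obtain ⟨p₀, hp₀⟩ := hNne
  -- compactness of N
  have hsph : IsCompact (Metric.sphere (0:EuclideanSpace ℝ (Fin d)) 1) := isCompact_sphere _ _
  obtain ⟨x₀, hx₀mem, hx₀min⟩ := hsph.exists_isMinOn ⟨x₁, by simpa using hx₁n⟩
    hf_cont.continuousOn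
  have hx₀0 : x₀ ≠ 0 := by
    intro h
    rw [Metric.mem_sphere, h] at hx₀mem; simp at hx₀mem
  have hm : 0 < f x₀ := hf_pos x₀ hx₀0
  have hNbound : ∀ p : EuclideanSpace ℝ (Fin d), f p = 1 → ‖p‖ ≤ (f x₀)⁻¹ := by
    intro p hp
    have hp0 := hne0 p hp
    have hpn : 0 < ‖p‖ := norm_pos_iff.mpr hp0
    have hu : ‖p‖⁻¹ • p ∈ Metric.sphere (0:EuclideanSpace ℝ (Fin d)) 1 := by
      simp [norm_smul, abs_of_pos (inv_pos.mpr hpn), inv_mul_cancel₀ hpn.ne']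
    have h1 : f x₀ ≤ f (‖p‖⁻¹ • p) := hx₀min hu
    have h2 : f p = ‖p‖ * f (‖p‖⁻¹ • p) := by
      conv_lhs => rw [show p = ‖p‖ • ‖p‖⁻¹ • p by
        rw [smul_smul, mul_inv_cancel₀ hpn.ne', one_smul]]
      rw [hf_hom _ hpn]
    have hkey : ‖p‖ * f x₀ ≤ 1 := by nlinarith
    calc ‖p‖ = ‖p‖ * f x₀ * (f x₀)⁻¹ := by field_simp
      _ ≤ 1 * (f x₀)⁻¹ := by
          exact mul_le_mul_of_nonneg_right hkey (inv_nonneg.mpr hm.le)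
      _ = (f x₀)⁻¹ := one_mul _
  have hNclosed : IsClosed {p : EuclideanSpace ℝ (Fin d) | f p = 1} :=
    isClosed_eq hf_cont continuous_const
  have hNcompact : IsCompact {p : EuclideanSpace ℝ (Fin d) | f p = 1} := by
    refine (isCompact_closedBall (0:EuclideanSpace ℝ (Fin d)) (f x₀)⁻¹).of_isClosed_subset
      hNclosed ?_
    intro p hp
    simpa [Metric.mem_closedBall, dist_zero_right] using hNbound p hp
  -- convexity of f
  have hK : Convex ℝ {x : EuclideanSpace ℝ (Fin d) | f x ≤ 1} := hconv.convex
  have hconvf : ConvexOn ℝ Set.univ f := by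
    refine ⟨convex_univ, ?_⟩
    intro x _ y _ a b ha hb hab
    rcases eq_or_lt_of_le ha with rfl | ha'
    · rw [zero_add] at hab; subst hab; simp
    rcases eq_or_lt_of_le hb with rfl | hb'
    · rw [add_zero] at hab; subst hab; simp
    rcases eq_or_ne x 0 with rfl | hx0
    · simp only [smul_zero, zero_add, f0, smul_eq_mul, mul_zero, hf_hom b hb', le_refl]
    rcases eq_or_ne y 0 with rfl | hy0
    · simp only [smul_zero, add_zero, f0, smul_eq_mul, mul_zero, hf_hom a ha', le_refl]
    have hfx := hf_pos x hx0
    have hfy := hf_pos y hy0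
    set s : ℝ := a * f x + b * f y with hs
    have hspos : 0 < s := by positivity
    have hz₁ : (f x)⁻¹ • x ∈ {u : EuclideanSpace ℝ (Fin d) | f u ≤ 1} := by
      simp only [Set.mem_setOf_eq, hf_hom _ (inv_pos.mpr hfx), inv_mul_cancel₀ hfx.ne', le_refl]
    have hz₂ : (f y)⁻¹ • y ∈ {u : EuclideanSpace ℝ (Fin d) | f u ≤ 1} := by
      simp only [Set.mem_setOf_eq, hf_hom _ (inv_pos.mpr hfy), inv_mul_cancel₀ hfy.ne', le_refl]
    have hc₁ : (0:ℝ) ≤ a * f x / s := by positivity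
    have hc₂ : (0:ℝ) ≤ b * f y / s := by positivity
    have hcsum : a * f x / s + b * f y / s = 1 := by field_simp; exact hs.symm
    have hzmem := hK hz₁ hz₂ hc₁ hc₂ hcsum
    have heq : (a * f x / s) • ((f x)⁻¹ • x) + (b * f y / s) • ((f y)⁻¹ • y)
        = s⁻¹ • (a • x + b • y) := by
      match_scalars <;> field_simp
    rw [heq, Set.mem_setOf_eq] at hzmem
    have hfin : f (a • x + b • y) = s * f (s⁻¹ • (a • x + b • y)) := by
      conv_lhs => rw [show a • x + b • y = s • s⁻¹ • (a • x + b • y) by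
        rw [smul_smul, mul_inv_cancel₀ hspos.ne', one_smul]]
      rw [hf_hom _ hspos]
    rw [hfin]
    calc s * f (s⁻¹ • (a • x + b • y)) ≤ s * 1 :=
          mul_le_mul_of_nonneg_left hzmem hspos.le
      _ = s := mul_one s
  -- linear bound from sup bound
  have hfle : ∀ q : EuclideanSpace ℝ (Fin d),
      (∀ p : EuclideanSpace ℝ (Fin d), f p = 1 → ⟪p, q⟫ ≤ 1) →
      ∀ x : EuclideanSpace ℝ (Fin d), ⟪x, q⟫ ≤ f x := by
    intro q hub x
    rcases eq_or_ne x 0 with rfl | hx0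
    · simp [f0]
    have hfx := hf_pos x hx0
    have hy : f ((f x)⁻¹ • x) = 1 := by
      rw [hf_hom _ (inv_pos.mpr hfx), inv_mul_cancel₀ hfx.ne']
    have := hub _ hy
    rw [real_inner_smul_left] at this
    calc ⟪x, q⟫ = f x * ((f x)⁻¹ * ⟪x, q⟫) := by field_simp
      _ ≤ f x * 1 := mul_le_mul_of_nonneg_left this hfx.le
      _ = f x := mul_one _
  ext q
  simp only [Set.mem_setOf_eq]
  constructor
  · rintro ⟨p, hp, rfl⟩
    have hp0 := hne0 p hp
    have hg := hf_grad p hp0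
    have heuler : ⟪gradf p, p⟫ = 1 := by rw [euler_rel hf_hom hg, hp]
    have heuler' : ⟪p, gradf p⟫ = 1 := by rw [real_inner_comm]; exact heuler
    rw [heuler', inv_one, one_smul]
    have hub : ∀ p' : EuclideanSpace ℝ (Fin d), f p' = 1 → ⟪p', gradf p⟫ ≤ 1 := by
      intro p' hp'
      have := grad_ineq hconvf hg p'
      rw [inner_sub_right, hp] at this
      rw [real_inner_comm]
      linarith [heuler, hp'.le, this]
    refine le_antisymm (Real.sSup_le ?_ zero_le_one) (le_csSup ⟨1, ?_⟩ ?_)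
    · rintro r ⟨p', hp', rfl⟩
      exact hub p' hp'
    · rintro r ⟨p', hp', rfl⟩
      exact hub p' hp'
    · exact ⟨p, hp, heuler'.symm⟩
  · intro hq
    -- the sup is attained
    have hcont : Continuous fun p : EuclideanSpace ℝ (Fin d) => ⟪p, q⟫ :=
      continuous_id.inner continuous_const
    obtain ⟨p, hpN, hmax⟩ := hNcompact.exists_isMaxOn ⟨p₀, hp₀⟩ hcont.continuousOn
    have hpN' : f p = 1 := hpN
    have hSne : ({r : ℝ | ∃ p, f p = 1 ∧ r = ⟪p, q⟫}).Nonempty := ⟨⟪p, q⟫, p, hpN', rfl⟩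
    have hbdd : BddAbove {r : ℝ | ∃ p, f p = 1 ∧ r = ⟪p, q⟫} := by
      refine ⟨⟪p, q⟫, ?_⟩
      rintro r ⟨p', hp', rfl⟩
      exact hmax hp'
    have hple : ⟪p, q⟫ ≤ 1 := hq ▸ le_csSup hbdd ⟨p, hpN', rfl⟩
    have hgep : sSup {r : ℝ | ∃ p, f p = 1 ∧ r = ⟪p, q⟫} ≤ ⟪p, q⟫ := by
      refine csSup_le hSne ?_
      rintro r ⟨p', hp', rfl⟩
      exact hmax hp'
    have hpq : ⟪p, q⟫ = 1 := le_antisymm hple (by rw [← hq]; exact hgep)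
    have hub : ∀ p' : EuclideanSpace ℝ (Fin d), f p' = 1 → ⟪p', q⟫ ≤ 1 := by
      intro p' hp'
      exact le_trans (hmax hp') hple
    have hp0 := hne0 p hpN'
    have hg := hf_grad p hp0
    have hsub : ∀ x : EuclideanSpace ℝ (Fin d), f p + ⟪q, x - p⟫ ≤ f x := by
      intro x
      rw [hpN', inner_sub_right]
      have h1 : ⟪q, x⟫ ≤ f x := by rw [real_inner_comm]; exact hfle q hub x
      have h2 : ⟪q, p⟫ = 1 := by rw [real_inner_comm]; exact hpq
      linarith
    have hqg : q = gradf p := subgrad_unique hg q hsub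
    have heuler' : ⟪p, gradf p⟫ = 1 := by
      rw [real_inner_comm, euler_rel hf_hom hg, hpN']
    exact ⟨p, hpN', by rw [heuler', inv_one, one_smul, hqg]⟩
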